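/- For every H ∈ (0,1), every t ∈ (0,1] and every integer j ≥ 0 with k̂_{t,j} ≥ 1, the Haar coefficient of f_t^{(1)} at n = 2^j + k̂_{t,j} − 1 satisfies ⟨f_t^{(1)}, ℋ_n⟩² ≤ 2^{−2jH} (H + 1/2)^{−2}. -/

import Mathlib

open MeasureTheory ProbabilityTheory Real Filter

noncomputable section

/-- The mother Haar wavelet: 1 on [0,1/2), -1 on [1/2,1], 0 otherwise. -/
def haarMother (s : ℝ) : ℝ :=
  if s ∈ Set.Ico (0 : ℝ) (1/2) then 1 else if s ∈ Set.Icc (1/2 : ℝ) 1 then -1 else 0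

/-- The Haar orthonormal basis of L²[0,1]: `haarFun 0 = 1` on `[0,1]`, and for
`n = 2^j + k` with `0 ≤ k < 2^j`, `haarFun n s = 2^(j/2) * haarMother (2^j * s - k)`. -/
def haarFun (n : ℕ) (s : ℝ) : ℝ :=
  if n = 0 then (if s ∈ Set.Icc (0 : ℝ) 1 then 1 else 0)
  else (2 : ℝ) ^ ((Nat.log2 n : ℝ) / 2) *
    haarMother ((2 : ℝ) ^ (Nat.log2 n : ℕ) * s - ((n - 2 ^ Nat.log2 n : ℕ) : ℝ))

/-- Inner product on L²[0,1]. -/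
def innerUnit (f g : ℝ → ℝ) : ℝ := ∫ s in (0 : ℝ)..1, f s * g s

/-- Inner product on L²[-1,0]. -/
def innerNeg (f g : ℝ → ℝ) : ℝ := ∫ s in (-1 : ℝ)..0, f s * g s

/-- The Haar orthonormal basis of L²[-1,0]. -/
def haarFunNeg (n : ℕ) (s : ℝ) : ℝ := haarFun n (s + 1)

/-- `f_t^{(1)}(s) = (t-s)^(H-1/2)` for `s ∈ [0,t)`, `0` otherwise. -/
def f1 (H t : ℝ) (s : ℝ) : ℝ := if 0 ≤ s ∧ s < t then (t - s) ^ (H - 1/2) else 0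

/-- `f_t^{(2)}(s) = (t-s)^(H-1/2) - (-s)^(H-1/2)` for `s ∈ [-1,0)`, `0` otherwise. -/
def f2 (H t : ℝ) (s : ℝ) : ℝ :=
  if -1 ≤ s ∧ s < 0 then (t - s) ^ (H - 1/2) - (-s) ^ (H - 1/2) else 0

/-- Haar coefficient `⟨f_t^{(1)}, ℋ_n⟩`. -/
def coeff1 (H t : ℝ) (n : ℕ) : ℝ := innerUnit (f1 H t) (haarFun n)

/-- Haar coefficient `⟨f_t^{(2)}, ℋ̃_n⟩`. -/
def coeff2 (H t : ℝ) (n : ℕ) : ℝ := innerNeg (f2 H t) (haarFunNeg n)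

/-- `g_n(t,H) = ∫₀¹ ((t + 1/x)^(H-3/2) - (1/x)^(H-3/2)) x⁻³ (∫₀ˣ ℋ_n(y) dy) dx`. -/
def gCoeff (H t : ℝ) (n : ℕ) : ℝ :=
  ∫ x in (0 : ℝ)..1,
    ((t + x⁻¹) ^ (H - 3/2) - (x⁻¹) ^ (H - 3/2)) * (x⁻¹) ^ (3 : ℕ) *
      (∫ y in (0 : ℝ)..x, haarFun n y)

/-- `C_H = 1/Γ(H + 1/2)`. -/
def CH (H : ℝ) : ℝ := 1 / Real.Gamma (H + 1/2)

private lemma subadd_rpow {x y p : ℝ} (hx : 0 ≤ x) (hy : 0 ≤ y) (hp0 : 0 ≤ p) (hp1 : p ≤ 1) :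
    (x + y) ^ p ≤ x ^ p + y ^ p := by
  have h := NNReal.rpow_add_le_add_rpow (x.toNNReal) (y.toNNReal) hp0 hp1
  have h' : (((x.toNNReal + y.toNNReal) ^ p : NNReal) : ℝ)
      ≤ ((x.toNNReal ^ p + y.toNNReal ^ p : NNReal) : ℝ) := NNReal.coe_le_coe.2 h
  push_cast [NNReal.coe_rpow] at h'
  rwa [Real.coe_toNNReal x hx, Real.coe_toNNReal y hy] at h'

lemma keyIneq {p u h : ℝ} (hp0 : 0 < p) (hp : p ≤ 3/2) (hu : 0 ≤ u) (hh : 0 < h) :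
    |(u + 2*h) ^ p - 2 * (u + h) ^ p + u ^ p| ≤ (2*h) ^ p := by
  have huh : (0:ℝ) ≤ u + h := by linarith
  have hu2h : (0:ℝ) ≤ u + 2*h := by linarith
  have hhp : (0:ℝ) ≤ h ^ p := rpow_nonneg hh.le p
  have hmono : h ^ p ≤ (2*h) ^ p := rpow_le_rpow hh.le (by linarith) hp0.le
  rcases le_or_gt p 1 with h1 | h1
  · have hA0 : (u + h) ^ p ≤ (u + 2*h) ^ p := rpow_le_rpow huh (by linarith) hp0.le
    have hB0 : u ^ p ≤ (u + h) ^ p := rpow_le_rpow hu (by linarith) hp0.le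
    have hA : (u + 2*h) ^ p ≤ (u + h) ^ p + h ^ p := by
      have e : u + 2*h = (u + h) + h := by ring
      rw [e]; exact subadd_rpow huh hh.le hp0.le h1
    have hB : (u + h) ^ p ≤ u ^ p + h ^ p := subadd_rpow hu hh.le hp0.le h1
    rw [abs_le]
    constructor <;> nlinarith
  · have hq0 : (0:ℝ) ≤ p/2 := by linarith
    have hq1 : p/2 ≤ 1 := by linarith
    have hcvx := (convexOn_rpow h1.le).2 (Set.mem_Ici.2 hu) (Set.mem_Ici.2 hu2h)
      (by norm_num : (0:ℝ) ≤ 1/2) (by norm_num : (0:ℝ) ≤ 1/2) (by norm_num)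
    simp only [smul_eq_mul] at hcvx
    rw [show (1/2 : ℝ) * u + (1/2 : ℝ) * (u + 2*h) = u + h from by ring] at hcvx
    have hlow : (u + h) ^ p ≤ (u ^ p + (u + 2*h) ^ p) / 2 := by linarith
    have sq_rpow : ∀ x : ℝ, 0 ≤ x → (x ^ 2) ^ (p/2) = x ^ p := by
      intro x hx
      rw [← Real.rpow_natCast x 2, ← Real.rpow_mul hx]
      congr 1; push_cast; ring
    have hccv := (Real.concaveOn_rpow hq0 hq1).2
      (Set.mem_Ici.2 (by positivity : (0:ℝ) ≤ (u+2*h)^2))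
      (Set.mem_Ici.2 (by positivity : (0:ℝ) ≤ u^2))
      (by norm_num : (0:ℝ) ≤ 1/2) (by norm_num : (0:ℝ) ≤ 1/2) (by norm_num)
    simp only [smul_eq_mul] at hccv
    rw [show (1/2:ℝ) * ((u+2*h)^2) + (1/2:ℝ) * (u^2) = (u+h)^2 + h^2 from by ring] at hccv
    have hsub : ((u+h)^2 + h^2) ^ (p/2) ≤ ((u+h)^2) ^ (p/2) + (h^2) ^ (p/2) :=
      subadd_rpow (by positivity) (by positivity) hq0 hq1
    rw [sq_rpow _ hu2h, sq_rpow _ hu] at hccv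
    rw [sq_rpow _ huh, sq_rpow _ hh.le] at hsub
    have hupper : (u + 2*h) ^ p - 2 * (u + h) ^ p + u ^ p ≤ 2 * h ^ p := by nlinarith
    have h2p : 2 * h ^ p ≤ (2*h) ^ p := by
      rw [Real.mul_rpow (by norm_num) hh.le]
      have : (2:ℝ) ≤ 2 ^ p := by
        calc (2:ℝ) = 2 ^ (1:ℝ) := (rpow_one 2).symm
        _ ≤ 2 ^ p := rpow_le_rpow_of_exponent_le (by norm_num) h1.le
      nlinarith
    rw [abs_le]
    exact ⟨by nlinarith [rpow_nonneg (by linarith : (0:ℝ) ≤ 2*h) p], by linarith⟩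

lemma haarMother_neg {x : ℝ} (h : x < 0) : haarMother x = 0 := by
  unfold haarMother
  rw [if_neg (by simp only [Set.mem_Ico, not_and]; intro h'; linarith),
    if_neg (by simp only [Set.mem_Icc, not_and]; intro h'; linarith)]

lemma haarMother_gt {x : ℝ} (h : 1 < x) : haarMother x = 0 := by
  unfold haarMother
  rw [if_neg (by simp only [Set.mem_Ico, not_and]; intro h'; linarith),
    if_neg (by simp only [Set.mem_Icc, not_and]; intro h'; linarith)]

lemma haarMother_one {x : ℝ} (h0 : 0 ≤ x) (h : x < 1/2) : haarMother x = 1 := by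
  unfold haarMother
  rw [if_pos (Set.mem_Ico.2 ⟨h0, h⟩)]

lemma haarMother_negone {x : ℝ} (h0 : 1/2 ≤ x) (h : x ≤ 1) : haarMother x = -1 := by
  unfold haarMother
  rw [if_neg (by simp only [Set.mem_Ico, not_and]; intro h'; linarith),
    if_pos (Set.mem_Icc.2 ⟨h0, h⟩)]

theorem stmt10 (H : ℝ) (hH : H ∈ Set.Ioo (0 : ℝ) 1) (t : ℝ) (ht : t ∈ Set.Ioc (0 : ℝ) 1)
    (j khat : ℕ) (hkhat : khat < 2 ^ j) (hk1 : 1 ≤ khat)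
    (hmem : (khat : ℝ) / 2 ^ j ≤ t ∧ (t < ((khat : ℝ) + 1) / 2 ^ j ∨ khat + 1 = 2 ^ j)) :
    (coeff1 H t (2 ^ j + khat - 1)) ^ 2
      ≤ (2 : ℝ) ^ (-(2 * (j : ℝ) * H)) / (H + 1/2) ^ 2 := by
  obtain ⟨hH0, hH1⟩ := hH
  obtain ⟨ht0, ht1⟩ := ht
  have hbt' := hmem.1
  -- indices
  set n := 2 ^ j + khat - 1 with hn
  have h2jnat : 1 ≤ 2 ^ j := Nat.one_le_two_pow
  have hn2j : 2 ^ j ≤ n := by omega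
  have hnlt : n < 2 ^ (j + 1) := by rw [pow_succ]; omega
  have hn0 : n ≠ 0 := by omega
  have hlog : Nat.log2 n = j := by
    rw [Nat.log2_eq_log_two]; exact Nat.log_eq_of_pow_le_of_lt_pow hn2j hnlt
  have hsubn : n - 2 ^ j = khat - 1 := by omega
  -- real setup
  have h2j : (0:ℝ) < 2 ^ j := by positivity
  have hk1R : (1:ℝ) ≤ (khat:ℝ) := by exact_mod_cast hk1
  have hkltR : (khat:ℝ) < 2 ^ j := by exact_mod_cast hkhat
  set q : ℝ := H - 1/2 with hqdef
  set p : ℝ := H + 1/2 with hpdef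
  have hq : (-1:ℝ) < q := by rw [hqdef]; linarith
  have hp0 : (0:ℝ) < p := by rw [hpdef]; linarith
  set a : ℝ := ((khat:ℝ) - 1) / 2 ^ j with ha
  set m : ℝ := ((khat:ℝ) - 1/2) / 2 ^ j with hm
  set b : ℝ := (khat:ℝ) / 2 ^ j with hb
  have ha0 : 0 ≤ a := div_nonneg (by linarith) h2j.le
  have ham : a < m := by rw [ha, hm, div_lt_div_iff₀ h2j h2j]; nlinarith
  have hmb : m < b := by rw [hm, hb, div_lt_div_iff₀ h2j h2j]; nlinarith
  have hbt : b ≤ t := hbt'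
  have hab : a < b := ham.trans hmb
  -- haar function form
  have hc0 : (0:ℝ) < (2 : ℝ) ^ ((j:ℝ)/2) := by positivity
  set c : ℝ := (2 : ℝ) ^ ((j:ℝ)/2) with hc
  have hhaar : ∀ s : ℝ, haarFun n s = c * haarMother (2 ^ j * s - ((khat:ℝ) - 1)) := by
    intro s
    rw [haarFun, if_neg hn0, hlog, hsubn, Nat.cast_sub hk1, Nat.cast_one]
  -- arg values at a m b
  have hphia : (2:ℝ) ^ j * a - ((khat:ℝ) - 1) = 0 := by rw [ha]; field_simp; ring
  have hphim : (2:ℝ) ^ j * m - ((khat:ℝ) - 1) = 1/2 := by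
    rw [hm]; first | (field_simp; ring) | field_simp
  have hphib : (2:ℝ) ^ j * b - ((khat:ℝ) - 1) = 1 := by
    rw [hb]; first | (field_simp; ring) | field_simp
  -- the integrand pieces
  set F : ℝ → ℝ := fun s => f1 H t s * haarFun n s with hF
  set g : ℝ → ℝ := fun s => (t - s) ^ q with hg
  have hgint : ∀ x y : ℝ, IntervalIntegrable g volume x y := by
    intro x y
    have := (intervalIntegral.intervalIntegrable_rpow' (a := t - x) (b := t - y) hq).comp_sub_left t
    simpa [hg] using this
  -- a.e. equalities on the four pieces
  have E1 : ∀ᵐ s ∂volume, s ∈ Set.uIoc (0:ℝ) a → F s = 0 := by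
    filter_upwards [compl_mem_ae_iff.2 (measure_singleton a)] with s hs hmem'
    rw [Set.mem_uIoc] at hmem'
    have hsa : s < a := by
      rcases hmem' with ⟨_, h2⟩ | ⟨h1, h2⟩
      · exact lt_of_le_of_ne h2 (by simpa using hs)
      · linarith
    rw [hF]; simp only
    rw [hhaar s, haarMother_neg (by linarith [mul_lt_mul_of_pos_left hsa h2j, hphia]), mul_zero, mul_zero]
  have E4 : ∀ᵐ s ∂volume, s ∈ Set.uIoc b 1 → F s = 0 := by
    have hb1 : b ≤ 1 := by rw [hb, div_le_one h2j]; linarith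
    filter_upwards with s hmem'
    rw [Set.mem_uIoc] at hmem'
    have hsb : b < s := by
      rcases hmem' with ⟨h1, h2⟩ | ⟨h1, h2⟩
      · exact h1
      · linarith
    rw [hF]; simp only
    rw [hhaar s, haarMother_gt (by linarith [mul_lt_mul_of_pos_left hsb h2j, hphib]), mul_zero, mul_zero]
  have E2 : ∀ᵐ s ∂volume, s ∈ Set.uIoc a m → F s = c * g s := by
    filter_upwards [compl_mem_ae_iff.2 (measure_singleton m)] with s hs hmem'
    rw [Set.mem_uIoc] at hmem'
    have hsam : a < s ∧ s < m := by
      rcases hmem' with ⟨h1, h2⟩ | ⟨h1, h2⟩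
      · exact ⟨h1, lt_of_le_of_ne h2 (by simpa using hs)⟩
      · exact absurd (h1.trans_le h2) (not_lt.2 ham.le)
    obtain ⟨hs1, hs2⟩ := hsam
    rw [hF]; simp only
    rw [hhaar s, haarMother_one (by linarith [mul_lt_mul_of_pos_left hs1 h2j, hphia])
      (by linarith [mul_lt_mul_of_pos_left hs2 h2j, hphim]), mul_one,
      f1, if_pos ⟨by linarith, by linarith⟩, hg]
    ring
  have E3 : ∀ᵐ s ∂volume, s ∈ Set.uIoc m b → F s = -(c * g s) := by
    filter_upwards [compl_mem_ae_iff.2 (measure_singleton b)] with s hs hmem'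
    rw [Set.mem_uIoc] at hmem'
    have hsmb : m < s ∧ s < b := by
      rcases hmem' with ⟨h1, h2⟩ | ⟨h1, h2⟩
      · exact ⟨h1, lt_of_le_of_ne h2 (by simpa using hs)⟩
      · exact absurd (h1.trans_le h2) (not_lt.2 hmb.le)
    obtain ⟨hs1, hs2⟩ := hsmb
    rw [hF]; simp only
    rw [hhaar s, haarMother_negone (by linarith [mul_lt_mul_of_pos_left hs1 h2j, hphim])
      (by linarith [mul_lt_mul_of_pos_left hs2 h2j, hphib]),
      f1, if_pos ⟨by linarith, by linarith⟩, hg]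
    ring
  -- integrability of F on the pieces
  have i1 : IntervalIntegrable F volume 0 a :=
    (intervalIntegrable_const (c := (0:ℝ))).congr_ae
      ((ae_restrict_iff' measurableSet_uIoc).2 (E1.mono fun s h hm' => (h hm').symm))
  have i2 : IntervalIntegrable F volume a m :=
    ((hgint a m).const_mul c).congr_ae
      ((ae_restrict_iff' measurableSet_uIoc).2 (E2.mono fun s h hm' => (h hm').symm))
  have i3 : IntervalIntegrable F volume m b :=
    (((hgint m b).const_mul c).neg).congr_ae
      ((ae_restrict_iff' measurableSet_uIoc).2 (E3.mono fun s h hm' => (h hm').symm))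
  have i4 : IntervalIntegrable F volume b 1 :=
    (intervalIntegrable_const (c := (0:ℝ))).congr_ae
      ((ae_restrict_iff' measurableSet_uIoc).2 (E4.mono fun s h hm' => (h hm').symm))
  -- compute coeff1
  have hcoeff : coeff1 H t n = c * (∫ s in a..m, g s) - c * (∫ s in m..b, g s) := by
    have hsplit : coeff1 H t n
        = (∫ s in (0:ℝ)..a, F s) + (∫ s in a..m, F s) + (∫ s in m..b, F s)
          + (∫ s in b..(1:ℝ), F s) := by
      rw [coeff1, innerUnit, ← hF,
        intervalIntegral.integral_add_adjacent_intervals i1 i2,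
        intervalIntegral.integral_add_adjacent_intervals (i1.trans i2) i3,
        intervalIntegral.integral_add_adjacent_intervals ((i1.trans i2).trans i3) i4]
    rw [hsplit, intervalIntegral.integral_congr_ae E1, intervalIntegral.integral_congr_ae E2,
      intervalIntegral.integral_congr_ae E3, intervalIntegral.integral_congr_ae E4,
      intervalIntegral.integral_const, intervalIntegral.integral_const,
      intervalIntegral.integral_const_mul, intervalIntegral.integral_neg,
      intervalIntegral.integral_const_mul]
    simp
    ring
  -- evaluate the rpow integrals
  have hInt : ∀ x y : ℝ, (∫ s in x..y, g s) = ((t - x) ^ p - (t - y) ^ p) / p := by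
    intro x y
    calc (∫ s in x..y, g s) = ∫ s in x..y, (t - s) ^ q := by rw [hg]
    _ = ∫ z in (t - y)..(t - x), z ^ q := intervalIntegral.integral_comp_sub_left (fun z => z ^ q) t
    _ = ((t - x) ^ (q + 1) - (t - y) ^ (q + 1)) / (q + 1) := integral_rpow (Or.inl hq)
    _ = ((t - x) ^ p - (t - y) ^ p) / p := by
        rw [show q + 1 = p from by rw [hqdef, hpdef]; ring]
  -- geometry
  set h0 : ℝ := 1 / (2 * 2 ^ j) with hh0def
  have hh0 : (0:ℝ) < h0 := by rw [hh0def]; positivity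
  set u : ℝ := t - b with hu
  have hu0 : (0:ℝ) ≤ u := by rw [hu]; linarith
  have htm : t - m = u + h0 := by
    rw [hu, hm, hb, hh0def]; first | (field_simp; ring) | field_simp
  have hta : t - a = u + 2 * h0 := by
    rw [hu, ha, hb, hh0def]; first | (field_simp; ring) | field_simp
  have e1 : coeff1 H t n = c / p * ((u + 2*h0) ^ p - 2 * (u + h0) ^ p + u ^ p) := by
    rw [hcoeff, hInt a m, hInt m b, hta, htm, ← hu]
    field_simp
    ring
  have hΔ : |(u + 2*h0) ^ p - 2 * (u + h0) ^ p + u ^ p| ≤ (2*h0) ^ p :=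
    keyIneq hp0 (by rw [hpdef]; linarith) hu0 hh0
  have hfinal : c ^ 2 * ((2 * h0) ^ p) ^ 2 = (2:ℝ) ^ (-(2 * (j : ℝ) * H)) := by
    have h2h0 : 2 * h0 = (2:ℝ) ^ (-(j:ℝ)) := by
      rw [hh0def, Real.rpow_neg (by norm_num : (0:ℝ) ≤ 2), Real.rpow_natCast]
      field_simp
    rw [h2h0, ← Real.rpow_mul (by norm_num : (0:ℝ) ≤ 2), hc,
      ← Real.rpow_natCast ((2:ℝ) ^ ((j:ℝ)/2)) 2,
      ← Real.rpow_natCast ((2:ℝ) ^ (-(j:ℝ) * p)) 2,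
      ← Real.rpow_mul (by norm_num : (0:ℝ) ≤ 2),
      ← Real.rpow_mul (by norm_num : (0:ℝ) ≤ 2),
      ← Real.rpow_add (by norm_num : (0:ℝ) < 2)]
    congr 1
    push_cast
    rw [hpdef]; ring
  calc (coeff1 H t n) ^ 2
      = (c / p) ^ 2 * ((u + 2*h0) ^ p - 2 * (u + h0) ^ p + u ^ p) ^ 2 := by rw [e1]; ring
    _ ≤ (c / p) ^ 2 * ((2*h0) ^ p) ^ 2 := by
        apply mul_le_mul_of_nonneg_left _ (by positivity)
        calc ((u + 2*h0) ^ p - 2 * (u + h0) ^ p + u ^ p) ^ 2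
            = |(u + 2*h0) ^ p - 2 * (u + h0) ^ p + u ^ p| ^ 2 := (sq_abs _).symm
          _ ≤ ((2*h0) ^ p) ^ 2 := pow_le_pow_left₀ (abs_nonneg _) hΔ 2
    _ = (2:ℝ) ^ (-(2 * (j : ℝ) * H)) / p ^ 2 := by
        rw [← hfinal]; field_simp
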